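/- For m = 4 candidates and k = 2, the vote distribution x with x[{c3,c4}] = x[{c1,c3,c4}] = x[{c1,c2,c3,c4}] = 1/3 (0 otherwise) admits a committee W = {c1,c2} that is Droop core-stable but not Lindahl priceable. -/
import Mathlib


/-- The counterexample distribution for `m = 4`, `k = 2` (candidate `cᵢ` is
`i - 1 : Fin 4`): mass `1/3` on `{c3,c4}, {c1,c3,c4}, {c1,c2,c3,c4}`. -/
def x17 : Finset (Fin 4) → ℚ := fun A =>
  if A = {2, 3} ∨ A = {0, 2, 3} ∨ A = {0, 1, 2, 3} then 1/3 else 0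

lemma budget_lb (p : Finset (Fin 4) → Fin 4 → ℚ) (hp : ∀ A c, 0 ≤ p A c) (c : Fin 4) :
    (1/3) * (p {2,3} c + p {0,2,3} c + p {0,1,2,3} c)
      ≤ ∑ A : Finset (Fin 4), x17 A * p A c := by
  have hsub : ({{2,3},{0,2,3},{0,1,2,3}} : Finset (Finset (Fin 4))) ⊆ Finset.univ := by
    intro a _; exact Finset.mem_univ a
  have h := Finset.sum_le_sum_of_subset_of_nonneg (f := fun A => x17 A * p A c) hsub
    (fun A _ _ => by
      have := hp A c
      have hx : 0 ≤ x17 A := by unfold x17; split <;> norm_num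
      positivity)
  refine le_trans (le_of_eq ?_) h
  rw [show ({{2,3},{0,2,3},{0,1,2,3}} : Finset (Finset (Fin 4)))
      = insert {2,3} (insert {0,2,3} {{0,1,2,3}}) from rfl]
  rw [Finset.sum_insert (by decide), Finset.sum_insert (by decide),
    Finset.sum_singleton]
  norm_num [x17]
  ring

/-- for `m = 4`, `k = 2`, the committee `W = {c1,c2}` is Droop
core-stable w.r.t. `x17` but not Lindahl priceable. -/
theorem stmt17 :
    (∀ W' : Finset (Fin 4), W'.Nonempty → W'.card ≤ 2 →
      (∑ A ∈ Finset.univ.filter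
          (fun A : Finset (Fin 4) =>
            (A ∩ ({0, 1} : Finset (Fin 4))).card < (A ∩ W').card), x17 A)
        ≤ (W'.card : ℚ) / 3) ∧
    ¬ (∃ p : Finset (Fin 4) → Fin 4 → ℚ,
        (∀ A c, 0 ≤ p A c) ∧
        (∀ c, (∑ A : Finset (Fin 4), x17 A * p A c) ≤ 1 / 2) ∧
        (∀ A T : Finset (Fin 4),
          (A ∩ ({0, 1} : Finset (Fin 4))).card < (A ∩ T).card →
            1 < ∑ c ∈ T, p A c)) := by
  constructor
  · intro W' hne hcard
    rw [Finset.sum_filter,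
      ← Finset.sum_subset
        (Finset.subset_univ ({{2,3},{0,2,3},{0,1,2,3}} : Finset (Finset (Fin 4))))
        (fun A _ hA => by
          simp only [Finset.mem_insert, Finset.mem_singleton, not_or] at hA
          simp [x17, hA.1, hA.2.1, hA.2.2])]
    rw [show ({{2,3},{0,2,3},{0,1,2,3}} : Finset (Finset (Fin 4)))
        = insert {2,3} (insert {0,2,3} {{0,1,2,3}}) from rfl]
    rw [Finset.sum_insert (by decide), Finset.sum_insert (by decide),
      Finset.sum_singleton]
    have hn1 : 1 ≤ W'.card := Finset.one_le_card.mpr hne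
    have hb3 : (({0,1,2,3} : Finset (Fin 4)) ∩ W').card ≤ W'.card :=
      Finset.card_le_card Finset.inter_subset_right
    have hb2 : (({0,2,3} : Finset (Fin 4)) ∩ W').card ≤ W'.card :=
      Finset.card_le_card Finset.inter_subset_right
    have hx1 : x17 {2,3} = 1/3 := by norm_num [x17]
    have hx2 : x17 {0,2,3} = 1/3 := by norm_num [x17]
    have hx3 : x17 {0,1,2,3} = 1/3 := by norm_num [x17]
    rw [hx1, hx2, hx3]
    have e2 : ((({0,2,3} : Finset (Fin 4)) ∩ {0,1}).card) = 1 := by decide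
    have e3 : ((({0,1,2,3} : Finset (Fin 4)) ∩ {0,1}).card) = 2 := by decide
    rw [if_neg (by omega : ¬ ((({0,1,2,3} : Finset (Fin 4)) ∩ {0,1}).card
        < (({0,1,2,3} : Finset (Fin 4)) ∩ W').card))]
    by_cases hc2 : ((({0,2,3} : Finset (Fin 4)) ∩ {0,1}).card
        < (({0,2,3} : Finset (Fin 4)) ∩ W').card)
    · have h2 : W'.card = 2 := by omega
      rw [if_pos hc2, h2]
      split <;> norm_num
    · rw [if_neg hc2]
      split <;> [skip; skip] <;>
        · have : (1:ℚ) ≤ (W'.card : ℚ) := by exact_mod_cast hn1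
          linarith
  · rintro ⟨p, hp, hb, hpr⟩
    have hb0 := le_trans (budget_lb p hp 0) (hb 0)
    have hb2 := le_trans (budget_lb p hp 2) (hb 2)
    have hb3 := le_trans (budget_lb p hp 3) (hb 3)
    have h1 := hpr {2,3} {2} (by decide)
    have h2 := hpr {2,3} {3} (by decide)
    have h3 := hpr {0,2,3} {0,2} (by decide)
    have h4 := hpr {0,2,3} {0,3} (by decide)
    have h5 := hpr {0,2,3} {2,3} (by decide)
    have h6 := hpr {0,1,2,3} {0,2,3} (by decide)
    simp only [Finset.sum_singleton, Finset.sum_pair (by decide : (0:Fin 4) ≠ 2),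
      Finset.sum_pair (by decide : (0:Fin 4) ≠ 3),
      Finset.sum_pair (by decide : (2:Fin 4) ≠ 3)] at h1 h2 h3 h4 h5
    rw [show ({0,2,3} : Finset (Fin 4)) = insert 0 {2,3} from rfl,
      Finset.sum_insert (by decide), Finset.sum_pair (by decide : (2:Fin 4) ≠ 3)] at h6
    have hnn := hp {2,3} 0
    linarith
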